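/- Let m ≡ 2 (mod 4), m ≥ 6. Let T ⊆ Z_m with |T| = m - 4, and let a_1, a_2, b_1, b_2 be four distinct elements of Z_m \ T with A = T ∪ {a_1, a_2}, B = T ∪ {b_1, b_2}. If R_A(n) = R_B(n) for all n ∈ Z_m, then a_1 + a_2 = b_1 + b_2 in Z_m. -/
import Mathlib


open Finset

/-- Representation function: number of ordered pairs (a, a') in A × A with a + a' = n. -/
def repFn {m : ℕ} (A : Finset (ZMod m)) (n : ZMod m) : ℕ :=
  ((A ×ˢ A).filter (fun p => p.1 + p.2 = n)).card

lemma repFn_eq {m : ℕ} [NeZero m] (S : Finset (ZMod m)) (n : ZMod m) :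
    repFn S n = (univ.filter (fun x => x ∈ S ∧ n - x ∈ S)).card := by
  unfold repFn
  apply Finset.card_bij' (fun p _ => p.1) (fun x _ => (x, n - x))
  · intro p hp
    simp only [mem_filter, mem_product] at hp
    simp only [mem_filter, mem_univ, true_and]
    refine ⟨hp.1.1, ?_⟩
    have := hp.2
    have : n - p.1 = p.2 := by rw [← hp.2]; ring
    rw [this]; exact hp.1.2
  · intro x hx
    simp only [mem_filter, mem_univ, true_and] at hx
    simp only [mem_filter, mem_product]
    exact ⟨⟨hx.1, hx.2⟩, by ring⟩
  · intro p hp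
    simp only [mem_filter, mem_product] at hp
    have : n - p.1 = p.2 := by rw [← hp.2]; ring
    simp [this]
  · intro x hx
    simp

lemma card_filter_sub {m : ℕ} [NeZero m] (S : Finset (ZMod m)) (n : ZMod m) :
    (univ.filter (fun x => n - x ∈ S)).card = S.card := by
  apply Finset.card_nbij' (fun x => n - x) (fun x => n - x)
  · intro x hx; simp at hx; simpa using hx
  · intro x hx; simp; simpa using hx
  · intro x _; simp
  · intro x _; simp

lemma repFn_compl {m : ℕ} [NeZero m] (S : Finset (ZMod m)) (n : ZMod m) :
    repFn Sᶜ n + 2 * S.card = m + repFn S n := by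
  classical
  rw [repFn_eq, repFn_eq]
  set c1 := (univ.filter (fun x => x ∈ S ∧ n - x ∈ S)).card with hc1
  set c2 := (univ.filter (fun x => x ∈ S ∧ n - x ∉ S)).card with hc2
  set c3 := (univ.filter (fun x => x ∉ S ∧ n - x ∈ S)).card with hc3
  set c4 := (univ.filter (fun x => x ∉ S ∧ n - x ∉ S)).card with hc4
  have hgoal : (univ.filter (fun x => x ∈ Sᶜ ∧ n - x ∈ Sᶜ)).card = c4 := by
    rw [hc4]; congr 1; apply Finset.filter_congr; intro x _; simp
  have e1 : c1 + c2 = S.card := by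
    rw [hc1, hc2, ← Finset.filter_filter, ← Finset.filter_filter,
      Finset.card_filter_add_card_filter_not]
    simp
  have e3 : c3 + c4 = (univ.filter (fun x : ZMod m => x ∉ S)).card := by
    rw [hc3, hc4, ← Finset.filter_filter, ← Finset.filter_filter,
      Finset.card_filter_add_card_filter_not]
  have e5 : S.card + (univ.filter (fun x : ZMod m => x ∉ S)).card = m := by
    have := Finset.card_filter_add_card_filter_not
      (s := (univ : Finset (ZMod m))) (p := fun x => x ∈ S)
    simpa [Finset.card_univ, ZMod.card] using this
  have e2 : c1 + c3 = S.card := by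
    have h2 : (univ.filter (fun x : ZMod m => n - x ∈ S ∧ x ∈ S)).card
        + (univ.filter (fun x : ZMod m => n - x ∈ S ∧ x ∉ S)).card
        = (univ.filter (fun x : ZMod m => n - x ∈ S)).card := by
      rw [← Finset.filter_filter, ← Finset.filter_filter,
        Finset.card_filter_add_card_filter_not]
    rw [card_filter_sub] at h2
    rw [hc1, hc3]
    rw [show (univ.filter (fun x : ZMod m => x ∈ S ∧ n - x ∈ S))
        = (univ.filter (fun x : ZMod m => n - x ∈ S ∧ x ∈ S)) from
      Finset.filter_congr (fun x _ => by tauto)]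
    rw [show (univ.filter (fun x : ZMod m => x ∉ S ∧ n - x ∈ S))
        = (univ.filter (fun x : ZMod m => n - x ∈ S ∧ x ∉ S)) from
      Finset.filter_congr (fun x _ => by tauto)]
    exact h2
  rw [hgoal]
  omega

lemma repFn_pair {m : ℕ} [NeZero m] (x y : ZMod m) (hxy : x ≠ y) (n : ZMod m) :
    repFn {x, y} n = (if x + x = n then 1 else 0) + (if x + y = n then 1 else 0)
      + (if y + x = n then 1 else 0) + (if y + y = n then 1 else 0) := by
  unfold repFn
  rw [Finset.card_filter]
  rw [show ({x, y} : Finset (ZMod m)) ×ˢ {x, y}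
      = {(x,x), (x,y), (y,x), (y,y)} from by ext p; simp [Prod.ext_iff]; tauto]
  rw [Finset.sum_insert (by simp [Prod.ext_iff]; tauto),
    Finset.sum_insert (by simp [Prod.ext_iff]; tauto),
    Finset.sum_insert (by simp [Prod.ext_iff]; tauto),
    Finset.sum_singleton]
  ring

theorem stmt16 (m : ℕ) [NeZero m] (hm : m % 4 = 2) (hm6 : 6 ≤ m)
    (T : Finset (ZMod m)) (hT : T.card = m - 4)
    (a₁ a₂ b₁ b₂ : ZMod m)
    (hdist : a₁ ≠ a₂ ∧ a₁ ≠ b₁ ∧ a₁ ≠ b₂ ∧ a₂ ≠ b₁ ∧ a₂ ≠ b₂ ∧ b₁ ≠ b₂)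
    (ha₁ : a₁ ∉ T) (ha₂ : a₂ ∉ T) (hb₁ : b₁ ∉ T) (hb₂ : b₂ ∉ T)
    (hR : ∀ n : ZMod m,
      repFn (T ∪ {a₁, a₂}) n = repFn (T ∪ {b₁, b₂}) n) :
    a₁ + a₂ = b₁ + b₂ := by
  classical
  obtain ⟨h12, h1b1, h1b2, h2b1, h2b2, hb12⟩ := hdist
  -- the complement of T is exactly the four elements
  have hquadcard : ({a₁, a₂, b₁, b₂} : Finset (ZMod m)).card = 4 := by
    rw [card_insert_of_notMem (by simp [h12, h1b1, h1b2]),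
      card_insert_of_notMem (by simp [h2b1, h2b2]),
      card_insert_of_notMem (by simp [hb12]), card_singleton]
  have hTcc : Tᶜ.card = 4 := by
    rw [Finset.card_compl, ZMod.card, hT]; omega
  have hTc : ({a₁, a₂, b₁, b₂} : Finset (ZMod m)) = Tᶜ := by
    apply Finset.eq_of_subset_of_card_le
    · intro z hz
      simp only [mem_insert, mem_singleton] at hz
      rw [Finset.mem_compl]
      rcases hz with rfl | rfl | rfl | rfl <;> assumption
    · rw [hTcc, hquadcard]
  have hmemT : ∀ z : ZMod m, z ∉ T ↔ (z = a₁ ∨ z = a₂ ∨ z = b₁ ∨ z = b₂) := by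
    intro z
    rw [← Finset.mem_compl, ← hTc]
    simp
  -- complements of A and B
  have hAc : (T ∪ {a₁, a₂})ᶜ = ({b₁, b₂} : Finset (ZMod m)) := by
    ext z
    simp only [Finset.mem_compl, Finset.mem_union, mem_insert, mem_singleton, not_or]
    constructor
    · rintro ⟨hzT, hz1, hz2⟩
      rcases (hmemT z).1 hzT with rfl | rfl | rfl | rfl <;> tauto
    · rintro (rfl | rfl)
      · exact ⟨hb₁, Ne.symm h1b1, Ne.symm h2b1⟩
      · exact ⟨hb₂, Ne.symm h1b2, Ne.symm h2b2⟩
  have hBc : (T ∪ {b₁, b₂})ᶜ = ({a₁, a₂} : Finset (ZMod m)) := by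
    ext z
    simp only [Finset.mem_compl, Finset.mem_union, mem_insert, mem_singleton, not_or]
    constructor
    · rintro ⟨hzT, hz1, hz2⟩
      rcases (hmemT z).1 hzT with rfl | rfl | rfl | rfl <;> tauto
    · rintro (rfl | rfl)
      · exact ⟨ha₁, h1b1, h1b2⟩
      · exact ⟨ha₂, h2b1, h2b2⟩
  -- card equality
  have hdisjA : Disjoint T ({a₁, a₂} : Finset (ZMod m)) := by
    rw [Finset.disjoint_right]
    intro z hz
    simp only [mem_insert, mem_singleton] at hz
    rcases hz with rfl | rfl <;> assumption
  have hdisjB : Disjoint T ({b₁, b₂} : Finset (ZMod m)) := by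
    rw [Finset.disjoint_right]
    intro z hz
    simp only [mem_insert, mem_singleton] at hz
    rcases hz with rfl | rfl <;> assumption
  have hcardA : (T ∪ {a₁, a₂}).card = T.card + 2 := by
    rw [Finset.card_union_of_disjoint hdisjA]; simp [h12]
  have hcardB : (T ∪ {b₁, b₂}).card = T.card + 2 := by
    rw [Finset.card_union_of_disjoint hdisjB]; simp [hb12]
  -- transfer to the complements
  have h2 : ∀ n : ZMod m, repFn {b₁, b₂} n = repFn {a₁, a₂} n := by
    intro n
    have cA := repFn_compl (T ∪ {a₁, a₂}) n
    have cB := repFn_compl (T ∪ {b₁, b₂}) n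
    rw [hAc] at cA
    rw [hBc] at cB
    have := hR n
    omega
  -- now the endgame
  by_contra hne
  have eS := h2 (a₁ + a₂)
  rw [repFn_pair b₁ b₂ hb12, repFn_pair a₁ a₂ h12] at eS
  have hA1 : a₁ + a₁ ≠ a₁ + a₂ := fun h => h12 (add_left_cancel h)
  have hA4 : a₂ + a₂ ≠ a₁ + a₂ := fun h => h12 (add_right_cancel h).symm
  have hB2 : b₁ + b₂ ≠ a₁ + a₂ := fun h => hne h.symm
  have hB3 : b₂ + b₁ ≠ a₁ + a₂ := fun h => hne (by rw [add_comm] at h; exact h.symm)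
  rw [if_neg hA1, if_neg hA4, if_neg hB2, if_neg hB3,
    if_pos (rfl : a₁ + a₂ = a₁ + a₂), if_pos (add_comm a₂ a₁)] at eS
  obtain ⟨hbb1, hbb2⟩ : b₁ + b₁ = a₁ + a₂ ∧ b₂ + b₂ = a₁ + a₂ := by
    split_ifs at eS with hA hB
    · exact ⟨hA, hB⟩
    all_goals omega
  have eT := h2 (b₁ + b₂)
  rw [repFn_pair b₁ b₂ hb12, repFn_pair a₁ a₂ h12] at eT
  have hC1 : b₁ + b₁ ≠ b₁ + b₂ := fun h => hb12 (add_left_cancel h)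
  have hC4 : b₂ + b₂ ≠ b₁ + b₂ := fun h => hb12 (add_right_cancel h).symm
  have hD2 : a₁ + a₂ ≠ b₁ + b₂ := hne
  have hD3 : a₂ + a₁ ≠ b₁ + b₂ := fun h => hne (by rw [add_comm] at h; exact h)
  rw [if_neg hC1, if_neg hC4, if_neg hD2, if_neg hD3,
    if_pos (rfl : b₁ + b₂ = b₁ + b₂), if_pos (add_comm b₂ b₁)] at eT
  obtain ⟨haa1, haa2⟩ : a₁ + a₁ = b₁ + b₂ ∧ a₂ + a₂ = b₁ + b₂ := by
    split_ifs at eT with hA hB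
    · exact ⟨hA, hB⟩
    all_goals omega
  -- arithmetic contradiction using m ≡ 2 (mod 4)
  set d : ZMod m := a₂ - a₁ with hd
  set c : ZMod m := b₁ - a₁ with hc
  have hd0 : d ≠ 0 := sub_ne_zero.2 (Ne.symm h12)
  have hdd : d + d = 0 := by rw [hd]; linear_combination haa2 - haa1
  have hdc : d = c + c := by rw [hd, hc]; linear_combination -hbb1
  have f1 : (d.val + d.val) % m = 0 := by
    have := congrArg ZMod.val hdd
    rwa [ZMod.val_add, ZMod.val_zero] at this
  have f2 : d.val < m := ZMod.val_lt d
  have f3 : d.val ≠ 0 := fun h => hd0 ((ZMod.val_eq_zero d).1 h)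
  have e1 : d.val + d.val = m := by
    have hdvd : m ∣ d.val + d.val := Nat.dvd_of_mod_eq_zero f1
    have hsub : m ∣ (d.val + d.val - m) := Nat.dvd_sub hdvd dvd_rfl
    have hle : m ≤ d.val + d.val := Nat.le_of_dvd (by omega) hdvd
    have := Nat.eq_zero_of_dvd_of_lt hsub
    omega
  have f4 : d.val = (c.val + c.val) % m := by
    rw [hdc, ZMod.val_add]
  have f5 : (c.val + c.val) % m % 2 = (c.val + c.val) % 2 :=
    Nat.mod_mod_of_dvd _ (Nat.dvd_of_mod_eq_zero (by omega))
  have f6 : d.val % 2 = (c.val + c.val) % 2 := by rw [f4]; exact f5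
  omega
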